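/- Let c ∈ ℝ \ {0}. For every integer l ≥ 1 one has 2 (d₁ d₂/(a+b)) · (b^{2l+2} − a^{2l+2}) · (b^{2l+1} − a^{2l+1}) + 2 (d₁ a^{2l} + d₂ b^{2l}) (d₁ a^{2l+2} + d₂ b^{2l+2}) − (d₁ a^{2l+1} + d₂ b^{2l+1})² ≠ 0. -/

import Mathlib

noncomputable def aDP (t : ℝ) : ℝ := (3 + Real.sqrt 5) / (2 * t)
noncomputable def bDP (t : ℝ) : ℝ := (3 - Real.sqrt 5) / (2 * t)
noncomputable def d1DP (c : ℝ) : ℝ := -(3 + Real.sqrt 5) / (18 * c)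
noncomputable def d2DP (c : ℝ) : ℝ := (-3 + Real.sqrt 5) / (18 * c)

/-- For every `l ≥ 1`,
`2 (d₁d₂/(a+b)) (b^{2l+2} − a^{2l+2}) (b^{2l+1} − a^{2l+1})
  + 2 (d₁ a^{2l} + d₂ b^{2l}) (d₁ a^{2l+2} + d₂ b^{2l+2})
  − (d₁ a^{2l+1} + d₂ b^{2l+1})² ≠ 0`,
where `t` is the real cube root of `c ≠ 0`. -/
theorem stmt17 (c t : ℝ) (hc : c ≠ 0) (ht : t ^ 3 = c) (l : ℕ) (hl : 1 ≤ l) :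
    2 * (d1DP c * d2DP c / (aDP t + bDP t)) *
          (bDP t ^ (2 * l + 2) - aDP t ^ (2 * l + 2)) *
          (bDP t ^ (2 * l + 1) - aDP t ^ (2 * l + 1)) +
        2 * (d1DP c * aDP t ^ (2 * l) + d2DP c * bDP t ^ (2 * l)) *
          (d1DP c * aDP t ^ (2 * l + 2) + d2DP c * bDP t ^ (2 * l + 2)) -
        (d1DP c * aDP t ^ (2 * l + 1) + d2DP c * bDP t ^ (2 * l + 1)) ^ 2 ≠ 0 := by
  have ht0 : t ≠ 0 := by
    intro h; apply hc; rw [← ht, h]; ring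
  have hs5 : Real.sqrt 5 ^ 2 = 5 := Real.sq_sqrt (by norm_num)
  have hs0 : (0:ℝ) ≤ Real.sqrt 5 := Real.sqrt_nonneg 5
  have hs3 : Real.sqrt 5 < 3 := by nlinarith
  set x := aDP t with hxdef
  set y := bDP t with hydef
  have hxt : x * t = (3 + Real.sqrt 5) / 2 := by
    rw [hxdef]; unfold aDP; field_simp
  have hyt : y * t = (3 - Real.sqrt 5) / 2 := by
    rw [hydef]; unfold bDP; field_simp
  have hxtpos : 0 < x * t := by rw [hxt]; linarith
  have hytpos : 0 < y * t := by rw [hyt]; linarith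
  have hxne : x ≠ 0 := by intro h; rw [h] at hxtpos; simp at hxtpos
  have hyne : y ≠ 0 := by intro h; rw [h] at hytpos; simp at hytpos
  have hsum : x + y = 3 / t := by
    rw [hxdef, hydef]; unfold aDP bDP; field_simp; ring
  have hsum' : (x + y) * t = 3 := by
    rw [hsum]; field_simp
  have hprod : x * y * t ^ 2 = 1 := by
    rw [hxdef, hydef]; unfold aDP bDP; field_simp; linear_combination (-1:ℝ) * hs5
  have hd1 : d1DP c = -x / (9 * t ^ 2) := by
    rw [hxdef]; unfold d1DP aDP; rw [← ht]; field_simp; ring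
  have hd2 : d2DP c = -y / (9 * t ^ 2) := by
    rw [hydef]; unfold d2DP bDP; rw [← ht]; field_simp; ring
  have e0 : ∀ z : ℝ, z ^ (2 * l) = (z ^ l) ^ 2 := by
    intro z; rw [← pow_mul]; ring_nf
  have e1 : ∀ z : ℝ, z ^ (2 * l + 1) = (z ^ l) ^ 2 * z := by
    intro z; rw [pow_add, ← pow_mul]; ring_nf
  have e2 : ∀ z : ℝ, z ^ (2 * l + 2) = (z ^ l) ^ 2 * z ^ 2 := by
    intro z; rw [pow_add, ← pow_mul]; ring_nf
  have hEq : 2 * (d1DP c * d2DP c / (x + y)) *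
          (y ^ (2 * l + 2) - x ^ (2 * l + 2)) *
          (y ^ (2 * l + 1) - x ^ (2 * l + 1)) +
        2 * (d1DP c * x ^ (2 * l) + d2DP c * y ^ (2 * l)) *
          (d1DP c * x ^ (2 * l + 2) + d2DP c * y ^ (2 * l + 2)) -
        (d1DP c * x ^ (2 * l + 1) + d2DP c * y ^ (2 * l + 1)) ^ 2 =
      (3 * (x ^ l * x) ^ 4 + 3 * (y ^ l * y) ^ 4
        + 2 * ((x ^ l) ^ 2) ^ 2 * (x * t) ^ 3 * (x * y) ^ 2
        + 2 * ((y ^ l) ^ 2) ^ 2 * (y * t) ^ 3 * (x * y) ^ 2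
        + 30 * (x ^ l * y ^ l) ^ 2 * (x * y) ^ 2) / (243 * t ^ 4) := by
    rw [hd1, hd2, hsum, e0 x, e0 y, e1 x, e1 y, e2 x, e2 y]
    field_simp
    linear_combination (243:ℝ) * (-2 * x ^ 4 * y * t * ((x ^ l) ^ 2) ^ 2 - 2 * x * y ^ 4 * t * ((y ^ l) ^ 2) ^ 2 - 6 * x * y * (x + y) ^ 2 * (x ^ l) ^ 2 * (y ^ l) ^ 2) * hprod + (243:ℝ) * ((x ^ l) ^ 2 * (y ^ l) ^ 2 * (-2 * x ^ 2 * y ^ 2 + 6 * x ^ 2 * y ^ 2 * ((x + y) * t + 3))) * hsum'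
  rw [hEq]
  have hxl : x ^ l ≠ 0 := pow_ne_zero _ hxne
  have hyl : y ^ l ≠ 0 := pow_ne_zero _ hyne
  have hxy : x * y ≠ 0 := mul_ne_zero hxne hyne
  have h1 : (0:ℝ) ≤ 3 * (x ^ l * x) ^ 4 := by positivity
  have h2 : (0:ℝ) ≤ 3 * (y ^ l * y) ^ 4 := by positivity
  have h3 : (0:ℝ) ≤ 2 * ((x ^ l) ^ 2) ^ 2 * (x * t) ^ 3 * (x * y) ^ 2 := by
    apply mul_nonneg
    apply mul_nonneg
    apply mul_nonneg (by norm_num) (by positivity)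
    exact le_of_lt (pow_pos hxtpos 3)
    positivity
  have h4 : (0:ℝ) ≤ 2 * ((y ^ l) ^ 2) ^ 2 * (y * t) ^ 3 * (x * y) ^ 2 := by
    apply mul_nonneg
    apply mul_nonneg
    apply mul_nonneg (by norm_num) (by positivity)
    exact le_of_lt (pow_pos hytpos 3)
    positivity
  have h5 : (0:ℝ) < 30 * (x ^ l * y ^ l) ^ 2 * (x * y) ^ 2 := by
    have hab : x ^ l * y ^ l ≠ 0 := mul_ne_zero hxl hyl
    have : (0:ℝ) < (x ^ l * y ^ l) ^ 2 := by positivity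
    have : (0:ℝ) < (x * y) ^ 2 := by positivity
    positivity
  apply div_ne_zero
  · linarith
  · positivity
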